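/- Let n ≥ 1 and let B be a graded-commutative ℕ-graded ℚ-algebra, finite-dimensional over ℚ, with B_0 = ℚ·1, which is generated as a ℚ-algebra by B_{2n} (hence B_p = 0 for all odd p). Let C be a graded-commutative ℕ-graded ℚ-algebra containing B as a graded subalgebra, and let z ∈ C be a homogeneous element of odd degree such that the ℚ-linear map B ⊕ B → C sending (b, b') to b + z·b' is bijective. Then every derivation D : C → C of negative degree vanishes on B; moreover B equals the even part ⊕_p C_{2p} of C, so every negative derivation of C vanishes on all even-degree elements of C. -/

import Mathlib

open DirectSum in


/-- algebraic content of Proposition 8.1 of Belegradek–Kapovitch for the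
Eschenburg and Bazaikin manifolds.  Let `n ≥ 1` and let `B` be a graded-commutative
ℕ-graded ℚ-algebra, finite-dimensional over ℚ, with `B₀ = ℚ·1`, generated as a ℚ-algebra
by `B_{2n}`.  Let `C` be a graded-commutative ℕ-graded ℚ-algebra containing `B` as a graded
subalgebra, and let `z ∈ C` be homogeneous of odd degree with `(b, b') ↦ b + z·b'` a
bijection `B ⊕ B → C`.  Then every negative derivation `D : C → C` vanishes on `B`;
moreover `B` equals the even part `⊕_p C_{2p}` of `C`, so every negative derivation of `C`
vanishes on all even-degree elements of `C`. -/
theorem negative_derivation_vanishes_on_even_part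
    {C : Type} [Ring C] [Algebra ℚ C]
    (𝒞 : ℕ → Submodule ℚ C) [GradedAlgebra 𝒞]
    -- graded commutativity of `C`
    (hcomm : ∀ (p q : ℕ), ∀ a ∈ 𝒞 p, ∀ b ∈ 𝒞 q,
      a * b = (-1 : C) ^ (p * q) * (b * a))
    (n : ℕ) (hn : 1 ≤ n)
    -- `B` is a graded subalgebra of `C` …
    (B : Subalgebra ℚ C)
    (hBgr : ∀ b ∈ B, ∀ p : ℕ, (DirectSum.decompose 𝒞 b p : C) ∈ B)
    -- … finite-dimensional over ℚ …
    [FiniteDimensional ℚ B]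
    -- … with `B₀ = ℚ·1` …
    (hB0 : B.toSubmodule ⊓ 𝒞 0 = Submodule.span ℚ {(1 : C)})
    -- … generated as a ℚ-algebra by `B_{2n}`
    (hgen : Algebra.adjoin ℚ ((B.toSubmodule ⊓ 𝒞 (2 * n) : Submodule ℚ C) : Set C) = B)
    -- `z ∈ C` is homogeneous of odd degree `l`
    (z : C) (l : ℕ) (hl : Odd l) (hz : z ∈ 𝒞 l)
    -- `C` is a free `B`-module with basis `{1, z}`
    (hfree : Function.Bijective
      (fun bb : B × B => (bb.1 : C) + z * (bb.2 : C))) :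
    -- then `B` is the even part of `C`, and every negative derivation of `C` vanishes on
    -- `B`, hence on all even-degree elements of `C`:
    (B.toSubmodule = ⨆ p : ℕ, 𝒞 (2 * p)) ∧
    (∀ j : ℕ, 1 ≤ j → ∀ D : C →ₗ[ℚ] C,
      (∀ (p : ℕ), ∀ a ∈ 𝒞 (p + j), D a ∈ 𝒞 p) →
      (∀ (p : ℕ), p < j → ∀ a ∈ 𝒞 p, D a = 0) →
      (∀ (p : ℕ) (a b : C), a ∈ 𝒞 p →
        D (a * b) = D a * b + (-1 : C) ^ (j * p) * (a * D b)) →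
      (∀ b ∈ B, D b = 0) ∧ (∀ p : ℕ, ∀ c ∈ 𝒞 (2 * p), D c = 0)) := by
  classical
  -- uniqueness of the decomposition `c = b + z * b'`
  have inj1 : ∀ b ∈ B, ∀ b' ∈ B, (b : C) + z * b' = 0 → b = 0 ∧ b' = 0 := by
    intro b hb b' hb' h
    have h2 : ((⟨b, hb⟩, ⟨b', hb'⟩) : B × B) = ((0, 0) : B × B) := by
      apply hfree.1
      simpa using h
    constructor
    · simpa [Subtype.ext_iff] using congrArg (fun p => (p.1 : C)) h2
    · simpa [Subtype.ext_iff] using congrArg (fun p => (p.2 : C)) h2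
  -- `B` is supported in degrees that are multiples of `2 n`
  have hBsupp : ∀ b ∈ B, b ∈ ⨆ k : ℕ, (B.toSubmodule ⊓ 𝒞 (2 * n * k)) := by
    intro b hb
    have hb2 : b ∈ Submodule.span ℚ
        ((Submonoid.closure ((B.toSubmodule ⊓ 𝒞 (2 * n) : Submodule ℚ C) : Set C) : Set C)) := by
      rw [← Algebra.adjoin_eq_span]
      rw [hgen]
      exact hb
    refine Submodule.span_le.2 ?_ hb2
    intro x hx
    have : ∃ k : ℕ, x ∈ B ∧ x ∈ 𝒞 (2 * n * k) := by
      induction hx using Submonoid.closure_induction with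
      | mem y hy => exact ⟨1, hy.1, by simpa using hy.2⟩
      | one => exact ⟨0, one_mem B, by simpa using SetLike.one_mem_graded 𝒞⟩
      | mul y y' hy hy' ihy ihy' =>
          obtain ⟨k, hyB, hyk⟩ := ihy
          obtain ⟨k', hyB', hyk'⟩ := ihy'
          refine ⟨k + k', mul_mem hyB hyB', ?_⟩
          rw [Nat.mul_add]
          exact SetLike.mul_mem_graded hyk hyk'
    obtain ⟨k, h1, h2⟩ := this
    exact Submodule.mem_iSup_of_mem k ⟨h1, h2⟩
  -- homogeneous components of elements of `B` vanish outside multiples of `2 n`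
  have hcompB : ∀ b ∈ B, ∀ q : ℕ, ¬ (2 * n ∣ q) → (DirectSum.decompose 𝒞 b q : C) = 0 := by
    intro b hb q hq
    have h1 : b ∈ ⨆ k : ℕ, 𝒞 (2 * n * k) :=
      (iSup_le fun k => le_trans inf_le_right (le_iSup (fun k : ℕ => 𝒞 (2 * n * k)) k))
        (hBsupp b hb)
    refine Submodule.iSup_induction (x := b)
      (motive := fun y : C => (DirectSum.decompose 𝒞 y q : C) = 0) _ h1 ?_ ?_ ?_
    · intro k y hy
      exact DirectSum.decompose_of_mem_ne 𝒞 hy (fun h => hq ⟨k, h.symm⟩)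
    · simp
    · intro y y' hy hy'
      rw [DirectSum.decompose_add, DirectSum.add_apply, Submodule.coe_add, hy, hy', add_zero]
  -- homogeneous components of `z * b'`
  have hzcomp : ∀ b' ∈ B, ∀ r : ℕ,
      (DirectSum.decompose 𝒞 (z * b') r : C) = 0 ∨
      ∃ β : C, β ∈ B ∧ β ∈ 𝒞 (r - l) ∧ l ≤ r ∧ 2 * n ∣ (r - l) ∧
        (DirectSum.decompose 𝒞 (z * b') r : C) = z * β := by
    intro b' hb' r
    have h1 : b' ∈ ⨆ k : ℕ, (B.toSubmodule ⊓ 𝒞 (2 * n * k)) := hBsupp b' hb'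
    refine Submodule.iSup_induction (x := b')
      (motive := fun y : C => (DirectSum.decompose 𝒞 (z * y) r : C) = 0 ∨
        ∃ β : C, β ∈ B ∧ β ∈ 𝒞 (r - l) ∧ l ≤ r ∧ 2 * n ∣ (r - l) ∧
          (DirectSum.decompose 𝒞 (z * y) r : C) = z * β) _ h1 ?_ ?_ ?_
    · intro k y hy
      have hzy : z * y ∈ 𝒞 (l + 2 * n * k) := SetLike.mul_mem_graded hz hy.2
      by_cases hr : l + 2 * n * k = r
      · right
        refine ⟨y, hy.1, ?_, ?_, ?_, ?_⟩
        · have : r - l = 2 * n * k := by omega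
          rw [this]; exact hy.2
        · omega
        · exact ⟨k, by omega⟩
        · subst hr
          exact DirectSum.decompose_of_mem_same 𝒞 hzy
      · left
        exact DirectSum.decompose_of_mem_ne 𝒞 hzy hr
    · left; simp
    · intro y y' hy hy'
      have hadd : (DirectSum.decompose 𝒞 (z * (y + y')) r : C)
          = (DirectSum.decompose 𝒞 (z * y) r : C) + (DirectSum.decompose 𝒞 (z * y') r : C) := by
        rw [mul_add, DirectSum.decompose_add, DirectSum.add_apply, Submodule.coe_add]
      rcases hy with hy0 | ⟨β, hβ1, hβ2, hβ3, hβ4, hβ5⟩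
      · rcases hy' with hy0' | ⟨β', hβ1', hβ2', hβ3', hβ4', hβ5'⟩
        · left; rw [hadd, hy0, hy0', add_zero]
        · right; exact ⟨β', hβ1', hβ2', hβ3', hβ4', by rw [hadd, hy0, hβ5', zero_add]⟩
      · rcases hy' with hy0' | ⟨β', hβ1', hβ2', hβ3', hβ4', hβ5'⟩
        · right; exact ⟨β, hβ1, hβ2, hβ3, hβ4, by rw [hadd, hy0', hβ5, add_zero]⟩
        · right
          exact ⟨β + β', add_mem hβ1 hβ1', add_mem hβ2 hβ2', hβ3, hβ4,
            by rw [hadd, hβ5, hβ5', mul_add]⟩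
  -- decomposition of a homogeneous element `c = b + z * b'`
  have hsplit : ∀ (q : ℕ) (c : C), c ∈ 𝒞 q → ∀ b ∈ B, ∀ b' ∈ B, (b : C) + z * b' = c →
      b ∈ 𝒞 q ∧ (z * b' = 0 ∨
        ∃ β : C, β ∈ B ∧ β ∈ 𝒞 (q - l) ∧ l ≤ q ∧ 2 * n ∣ (q - l) ∧ z * b' = z * β) := by
    intro q c hc b hb b' hb' heq
    have hcompr : ∀ r : ℕ, r ≠ q →
        (DirectSum.decompose 𝒞 b r : C) = 0 ∧ (DirectSum.decompose 𝒞 (z * b') r : C) = 0 := by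
      intro r hr
      have h0 : (DirectSum.decompose 𝒞 b r : C) + (DirectSum.decompose 𝒞 (z * b') r : C) = 0 := by
        have : (DirectSum.decompose 𝒞 (b + z * b') r : C) = 0 := by
          rw [heq]
          exact DirectSum.decompose_of_mem_ne 𝒞 hc (fun h => hr h.symm)
        rw [DirectSum.decompose_add, DirectSum.add_apply, Submodule.coe_add] at this
        exact this
      rcases hzcomp b' hb' r with h | ⟨β, hβ1, hβ2, hβ3, hβ4, hβ5⟩
      · rw [h, add_zero] at h0
        exact ⟨h0, h⟩
      · rw [hβ5] at h0
        obtain ⟨e1, e2⟩ := inj1 _ (hBgr b hb r) _ hβ1 h0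
        exact ⟨e1, by rw [hβ5, e2, mul_zero]⟩
    have hbq : b = (DirectSum.decompose 𝒞 b q : C) := by
      conv_lhs => rw [← DirectSum.sum_support_decompose 𝒞 b]
      refine (Finset.sum_eq_single q (fun r _ hr => (hcompr r hr).1) ?_)
      intro hq
      simp only [DFinsupp.notMem_support_iff] at hq
      rw [hq, ZeroMemClass.coe_zero]
    have hzbq : z * b' = (DirectSum.decompose 𝒞 (z * b') q : C) := by
      conv_lhs => rw [← DirectSum.sum_support_decompose 𝒞 (z * b')]
      refine (Finset.sum_eq_single q (fun r _ hr => (hcompr r hr).2) ?_)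
      intro hq
      simp only [DFinsupp.notMem_support_iff] at hq
      rw [hq, ZeroMemClass.coe_zero]
    constructor
    · rw [hbq]; exact SetLike.coe_mem _
    · rcases hzcomp b' hb' q with h | ⟨β, hβ1, hβ2, hβ3, hβ4, hβ5⟩
      · left; rw [hzbq, h]
      · right; exact ⟨β, hβ1, hβ2, hβ3, hβ4, by rw [hzbq, hβ5]⟩
  have h2n0 : 0 < 2 * n := by omega
  -- Part 1 : `B` is the even part of `C`
  have goal1 : B.toSubmodule = ⨆ p : ℕ, 𝒞 (2 * p) := by
    apply le_antisymm
    · intro b hb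
      refine (iSup_le fun k : ℕ => ?_ : (⨆ k : ℕ, (B.toSubmodule ⊓ 𝒞 (2 * n * k))) ≤ _)
        (hBsupp b hb)
      refine le_trans inf_le_right ?_
      have h : 2 * n * k = 2 * (n * k) := by ring
      rw [h]
      exact le_iSup (fun p : ℕ => 𝒞 (2 * p)) (n * k)
    · refine iSup_le fun p => ?_
      intro c hc
      obtain ⟨⟨b, b'⟩, hbb⟩ := hfree.2 c
      simp only at hbb
      obtain ⟨hbq, hzb⟩ := hsplit (2 * p) c hc b b.2 b' b'.2 hbb
      have hzb0 : z * (b' : C) = 0 := by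
        rcases hzb with h | ⟨β, hβ1, hβ2, hβ3, hβ4, hβ5⟩
        · exact h
        · exfalso
          have hodd : Odd (2 * p - l) := Nat.Even.sub_odd hβ3 ⟨p, by ring⟩ hl
          obtain ⟨k, hk⟩ := dvd_trans (Dvd.intro n rfl) hβ4
          obtain ⟨t, ht⟩ := hodd
          omega
      have : (b : C) = c := by rw [← hbb, hzb0, add_zero]
      rw [← this]
      exact b.2
  refine ⟨goal1, ?_⟩
  -- Part 2 : negative derivations vanish on `B`
  intro j hj D hD1 hD2 hD3
  have step1 : ∀ x ∈ B, x ∈ 𝒞 (2 * n) → D x = 0 := by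
    intro x hxB hx2n
    by_cases hx0 : x = 0
    · rw [hx0, map_zero]
    -- powers of `x`
    have hxpow : ∀ k : ℕ, x ^ k ∈ 𝒞 (2 * n * k) := by
      intro k
      have := SetLike.pow_mem_graded k hx2n
      simpa [smul_eq_mul, Nat.mul_comm] using this
    -- `x` is nilpotent
    have hex : ∃ m : ℕ, x ^ (m + 1) = 0 := by
      obtain ⟨P, hPmonic, hPeval⟩ := IsIntegral.of_finite ℚ (⟨x, hxB⟩ : B)
      have hPC : (Polynomial.aeval x) P = 0 := by
        have h2 := Polynomial.coe_aeval_mk_apply (R := ℚ) (A := C) (p := P) (x := x) hxB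
        rw [show (Polynomial.aeval (⟨x, hxB⟩ : B)) P
            = Polynomial.eval₂ (algebraMap ℚ B) (⟨x, hxB⟩ : B) P from rfl,
          hPeval, ZeroMemClass.coe_zero] at h2
        exact h2.symm
      set d := P.natDegree with hd
      have hsum : ∑ i ∈ Finset.range (d + 1), P.coeff i • x ^ i = 0 := by
        rw [← Polynomial.aeval_eq_sum_range]; exact hPC
      have hxd : x ^ d = 0 := by
        have h0 : (DirectSum.decompose 𝒞
            (∑ i ∈ Finset.range (d + 1), P.coeff i • x ^ i) (2 * n * d) : C) = 0 := by
          rw [hsum]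
          simp
        rw [DirectSum.decompose_sum, DFinsupp.finset_sum_apply,
          AddSubmonoidClass.coe_finset_sum] at h0
        have hterm : ∀ i ∈ Finset.range (d + 1),
            ((DirectSum.decompose 𝒞 (P.coeff i • x ^ i) (2 * n * d) : C))
              = if i = d then x ^ d else 0 := by
          intro i _
          rw [DirectSum.decompose_smul, DFinsupp.smul_apply, Submodule.coe_smul]
          by_cases hi : i = d
          · rw [if_pos hi, hi, DirectSum.decompose_of_mem_same 𝒞 (hxpow d), hd,
              hPmonic.coeff_natDegree, one_smul]
          · rw [if_neg hi,
              DirectSum.decompose_of_mem_ne 𝒞 (hxpow i) (fun h =>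
                hi (Nat.eq_of_mul_eq_mul_left h2n0 h)), smul_zero]
        rw [Finset.sum_congr rfl hterm] at h0
        simpa using h0
      rcases Nat.eq_zero_or_pos d with hd0 | hd0
      · exfalso
        apply hx0
        rw [hd0, pow_zero] at hxd
        rw [← mul_one x, hxd, mul_zero]
      · exact ⟨d - 1, by rwa [Nat.sub_add_cancel hd0]⟩
    set m := Nat.find hex with hm
    have hm1 : x ^ (m + 1) = 0 := Nat.find_spec hex
    have hym : x ^ m ≠ 0 := by
      intro h
      rcases Nat.eq_zero_or_pos m with hm0 | hm0
      · rw [hm0, pow_zero] at h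
        exact hx0 (by rw [← mul_one x, h, mul_zero])
      · have := Nat.find_min hex (show m - 1 < m by omega)
        rw [Nat.sub_add_cancel hm0] at this
        exact this h
    by_cases hjn : 2 * n < j
    · exact hD2 _ hjn x hx2n
    push_neg at hjn
    have hq' : (2 * n - j) + j = 2 * n := Nat.sub_add_cancel hjn
    have hDx : D x ∈ 𝒞 (2 * n - j) := hD1 _ x (by rw [hq']; exact hx2n)
    obtain ⟨⟨b, b'⟩, hbb⟩ := hfree.2 (D x)
    simp only at hbb
    obtain ⟨hbq, hzb⟩ := hsplit (2 * n - j) (D x) hDx b b.2 b' b'.2 hbb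
    have hqlt : 2 * n - j < 2 * n := by omega
    obtain ⟨lam, hlam⟩ : ∃ lam : ℚ, (b : C) = lam • (1 : C) := by
      by_cases hdvd : 2 * n ∣ (2 * n - j)
      · have hq0 : 2 * n - j = 0 := Nat.eq_zero_of_dvd_of_lt hdvd hqlt
        have : (b : C) ∈ Submodule.span ℚ ({(1 : C)} : Set C) := by
          rw [← hB0]
          exact ⟨b.2, hq0 ▸ hbq⟩
        obtain ⟨a, ha⟩ := Submodule.mem_span_singleton.mp this
        exact ⟨a, ha.symm⟩
      · have hb0 : (b : C) = 0 := by
          rw [← DirectSum.decompose_of_mem_same 𝒞 hbq]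
          exact hcompB b b.2 _ hdvd
        exact ⟨0, by rw [hb0, zero_smul]⟩
    obtain ⟨mu, hmu⟩ : ∃ mu : ℚ, z * (b' : C) = mu • z := by
      rcases hzb with h | ⟨β, hβ1, hβ2, hβ3, hβ4, hβ5⟩
      · exact ⟨0, by rw [h, zero_smul]⟩
      · have h0 : (2 * n - j) - l = 0 :=
          Nat.eq_zero_of_dvd_of_lt hβ4 (lt_of_le_of_lt (Nat.sub_le _ _) hqlt)
        have : β ∈ Submodule.span ℚ ({(1 : C)} : Set C) := by
          rw [← hB0]
          exact ⟨hβ1, h0 ▸ hβ2⟩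
        obtain ⟨c0, hc0⟩ := Submodule.mem_span_singleton.mp this
        refine ⟨c0, ?_⟩
        rw [hβ5, ← hc0, mul_smul_comm, mul_one]
    -- `D x = lam • 1 + mu • z`
    have hDxval : D x = lam • (1 : C) + mu • z := by
      rw [← hbb, hlam, hmu]
    -- the power rule
    have hpow : ∀ k : ℕ, D (x ^ (k + 1)) = (k + 1) • (x ^ k * D x) := by
      intro k
      induction k with
      | zero => simp
      | succ k ih =>
        have hsign : ((-1 : C)) ^ (j * (2 * n)) = 1 :=
          Even.neg_one_pow ⟨j * n, by ring⟩
        have hcom1 : D x * x ^ (k + 1) = x ^ (k + 1) * D x := by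
          rw [hcomm _ _ (D x) hDx _ (hxpow (k + 1))]
          rw [Even.neg_one_pow ⟨(2 * n - j) * (n * (k + 1)), by ring⟩, one_mul]
        calc D (x ^ (k + 1 + 1)) = D (x * x ^ (k + 1)) := by rw [← pow_succ']
          _ = D x * x ^ (k + 1) + (-1 : C) ^ (j * (2 * n)) * (x * D (x ^ (k + 1))) :=
              hD3 (2 * n) x _ hx2n
          _ = x ^ (k + 1) * D x + x * ((k + 1) • (x ^ k * D x)) := by
              rw [hsign, one_mul, hcom1, ih]
          _ = x ^ (k + 1) * D x + (k + 1) • (x ^ (k + 1) * D x) := by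
              rw [mul_smul_comm, ← mul_assoc, ← pow_succ']
          _ = (k + 1 + 1) • (x ^ (k + 1) * D x) := by
              conv_rhs => rw [succ_nsmul]
              exact add_comm _ _
    have h1 : x ^ m * D x = 0 := by
      have h0 := hpow m
      rw [hm1, map_zero] at h0
      have h0' : ((m + 1 : ℕ) : ℚ) • (x ^ m * D x) = 0 := by
        rw [Nat.cast_smul_eq_nsmul]
        exact h0.symm
      rcases smul_eq_zero.mp h0' with h | h
      · exact absurd h (by positivity)
      · exact h
    -- conclude
    have hcomz : x ^ m * z = z * x ^ m := by
      rw [hcomm _ _ (x ^ m) (hxpow m) z hz]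
      rw [Even.neg_one_pow ⟨n * m * l, by ring⟩, one_mul]
    have hfin : (lam • x ^ m : C) + z * (mu • x ^ m) = 0 := by
      have : x ^ m * D x = lam • x ^ m + z * (mu • x ^ m) := by
        rw [hDxval, mul_add, mul_smul_comm, mul_one, mul_smul_comm, hcomz, mul_smul_comm]
      rw [← this, h1]
    have hxmB : x ^ m ∈ B := pow_mem hxB m
    obtain ⟨e1, e2⟩ := inj1 _ (Submodule.smul_mem B.toSubmodule lam hxmB) _
      (Submodule.smul_mem B.toSubmodule mu hxmB) hfin
    have hlam0 : lam = 0 := by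
      rcases smul_eq_zero.mp e1 with h | h
      · exact h
      · exact absurd h hym
    have hmu0 : mu = 0 := by
      rcases smul_eq_zero.mp e2 with h | h
      · exact h
      · exact absurd h hym
    rw [hDxval, hlam0, hmu0, zero_smul, zero_smul, add_zero]
  -- `D` vanishes on `B`
  have hDB : ∀ b ∈ B, D b = 0 := by
    intro b hb
    have hb2 : b ∈ Submodule.span ℚ
        ((Submonoid.closure ((B.toSubmodule ⊓ 𝒞 (2 * n) : Submodule ℚ C) : Set C) : Set C)) := by
      rw [← Algebra.adjoin_eq_span, hgen]
      exact hb
    have hcl : ∀ c ∈ Submonoid.closure ((B.toSubmodule ⊓ 𝒞 (2 * n) : Submodule ℚ C) : Set C),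
        D c = 0 ∧ ∃ k : ℕ, c ∈ 𝒞 (2 * n * k) := by
      intro c hc
      induction hc using Submonoid.closure_induction with
      | mem y hy => exact ⟨step1 y hy.1 hy.2, 1, by simpa using hy.2⟩
      | one =>
        refine ⟨hD2 0 hj 1 (SetLike.one_mem_graded 𝒞), 0, by simpa using SetLike.one_mem_graded 𝒞⟩
      | mul y y' hy hy' ihy ihy' =>
        obtain ⟨hDy, k, hyk⟩ := ihy
        obtain ⟨hDy', k', hyk'⟩ := ihy'
        constructor
        · rw [hD3 (2 * n * k) y y' hyk, hDy, hDy', zero_mul, mul_zero, mul_zero, add_zero]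
        · exact ⟨k + k', by rw [Nat.mul_add]; exact SetLike.mul_mem_graded hyk hyk'⟩
    refine Submodule.span_induction (p := fun c _ => D c = 0) (fun c hc => (hcl c hc).1) ?_ ?_ ?_ hb2
    · exact map_zero D
    · intro u v _ _ hu hv
      rw [map_add, hu, hv, add_zero]
    · intro a u _ hu
      rw [map_smul, hu, smul_zero]
  refine ⟨hDB, ?_⟩
  intro p c hc
  apply hDB
  have : c ∈ B.toSubmodule := by
    rw [goal1]
    exact Submodule.mem_iSup_of_mem p hc
  exact this
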